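/- For the weight W_{δ,κ}(x) = (1+x)^{1+κ/2}/(1 + δ(1+x)^{κ/2}) with 0 < κ ≤ 2 and δ > 0, the second derivative satisfies 0 ≤ W''_{δ,κ}(x) ≤ C_κ (1+x)^{κ/2 - 1} for all x ≥ 0, where C_κ depends only on κ (uniform in δ); in particular W_{δ,κ} is convex on [0,∞). -/

import Mathlib

open Real Set Filter

private lemma hd1 (p δ x : ℝ) (hx : 0 < 1 + x) (hδ : 0 < δ) :
    HasDerivAt (fun y : ℝ => (1 + y) ^ (1 + p) / (1 + δ * (1 + y) ^ p))
      ((1 + x) ^ p * ((1 + p) + δ * (1 + x) ^ p) / (1 + δ * (1 + x) ^ p) ^ 2) x := by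
  have h1 : HasDerivAt (fun y : ℝ => 1 + y) 1 x := by
    simpa using (hasDerivAt_id x).const_add (1 : ℝ)
  have hne : (1 : ℝ) + x ≠ 0 := ne_of_gt hx
  have hN : HasDerivAt (fun y : ℝ => (1 + y) ^ (1 + p))
      ((1 + p) * (1 + x) ^ (1 + p - 1) * 1) x :=
    (Real.hasDerivAt_rpow_const (Or.inl hne)).comp x h1
  have hA : HasDerivAt (fun y : ℝ => (1 + y) ^ p) (p * (1 + x) ^ (p - 1) * 1) x :=
    (Real.hasDerivAt_rpow_const (Or.inl hne)).comp x h1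
  have hD : HasDerivAt (fun y : ℝ => 1 + δ * (1 + y) ^ p)
      (δ * (p * (1 + x) ^ (p - 1) * 1)) x := (hA.const_mul δ).const_add 1
  have hApos : 0 < (1 + x) ^ p := Real.rpow_pos_of_pos hx p
  have hDne : (1 + δ * (1 + x) ^ p) ≠ 0 := by positivity
  have := hN.div hD hDne
  convert this using 1
  · rfl
  · rfl
  · rfl
  have e1 : (1 + x) ^ (1 + p - 1) = (1 + x) ^ p := by congr 1; ring
  have e2 : (1 + x) ^ (1 + p) = (1 + x) * (1 + x) ^ p := by
    rw [Real.rpow_add hx, Real.rpow_one]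
  have e3 : (1 + x) ^ (p - 1) = (1 + x) ^ p / (1 + x) := by
    rw [Real.rpow_sub hx, Real.rpow_one]
  rw [e1, e2, e3]
  field_simp
  ring

private lemma hd2 (p δ x : ℝ) (hx : 0 < 1 + x) (hδ : 0 < δ) :
    HasDerivAt (fun y : ℝ =>
        (1 + y) ^ p * ((1 + p) + δ * (1 + y) ^ p) / (1 + δ * (1 + y) ^ p) ^ 2)
      (p * (1 + x) ^ (p - 1) * ((1 + p) + (1 - p) * (δ * (1 + x) ^ p)) /
        (1 + δ * (1 + x) ^ p) ^ 3) x := by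
  have h1 : HasDerivAt (fun y : ℝ => 1 + y) 1 x := by
    simpa using (hasDerivAt_id x).const_add (1 : ℝ)
  have hne : (1 : ℝ) + x ≠ 0 := ne_of_gt hx
  have hA : HasDerivAt (fun y : ℝ => (1 + y) ^ p) (p * (1 + x) ^ (p - 1) * 1) x :=
    (Real.hasDerivAt_rpow_const (Or.inl hne)).comp x h1
  have hApos : 0 < (1 + x) ^ p := Real.rpow_pos_of_pos hx p
  have hdenpos : 0 < 1 + δ * (1 + x) ^ p := by positivity
  have hDne2 : ((1 + δ * (1 + x) ^ p) ^ 2 : ℝ) ≠ 0 := by positivity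
  have hN : HasDerivAt (fun y : ℝ => (1 + y) ^ p * ((1 + p) + δ * (1 + y) ^ p))
      ((p * (1 + x) ^ (p - 1) * 1) * ((1 + p) + δ * (1 + x) ^ p) +
        (1 + x) ^ p * (δ * (p * (1 + x) ^ (p - 1) * 1))) x :=
    hA.mul ((hA.const_mul δ).const_add (1 + p))
  have hD : HasDerivAt (fun y : ℝ => (1 + δ * (1 + y) ^ p) ^ 2)
      (2 * (1 + δ * (1 + x) ^ p) ^ 1 * (δ * (p * (1 + x) ^ (p - 1) * 1))) x :=
    ((hA.const_mul δ).const_add 1).pow 2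
  have := hN.div hD hDne2
  convert this using 1
  · rfl
  · rfl
  · rfl
  have e3 : (1 + x) ^ (p - 1) = (1 + x) ^ p / (1 + x) := by
    rw [Real.rpow_sub hx, Real.rpow_one]
  rw [e3]
  field_simp
  ring

theorem stmt_19 (κ : ℝ) (hκ : 0 < κ) (hκ2 : κ ≤ 2) :
    ∃ C : ℝ, 0 < C ∧ ∀ δ : ℝ, 0 < δ →
      (∀ x : ℝ, 0 ≤ x →
        0 ≤ deriv (deriv (fun y : ℝ =>
              (1 + y) ^ (1 + κ / 2) / (1 + δ * (1 + y) ^ (κ / 2)))) x ∧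
        deriv (deriv (fun y : ℝ =>
              (1 + y) ^ (1 + κ / 2) / (1 + δ * (1 + y) ^ (κ / 2)))) x
          ≤ C * (1 + x) ^ (κ / 2 - 1)) ∧
      ConvexOn ℝ (Set.Ici (0 : ℝ)) (fun y : ℝ =>
        (1 + y) ^ (1 + κ / 2) / (1 + δ * (1 + y) ^ (κ / 2))) := by
  set p := κ / 2 with hp
  have hp0 : 0 < p := by positivity
  have hp1 : p ≤ 1 := by simp only [hp]; linarith
  refine ⟨2, by norm_num, fun δ hδ => ?_⟩
  set f := fun y : ℝ => (1 + y) ^ (1 + p) / (1 + δ * (1 + y) ^ p) with hf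
  set F1 := fun y : ℝ =>
    (1 + y) ^ p * ((1 + p) + δ * (1 + y) ^ p) / (1 + δ * (1 + y) ^ p) ^ 2 with hF1
  -- on the open set Ioi (-1), deriv f = F1
  have hderiv : ∀ x : ℝ, 0 < 1 + x → deriv f x = F1 x := fun x hx => (hd1 p δ x hx hδ).deriv
  have hEq : ∀ x : ℝ, 0 < 1 + x → deriv f =ᶠ[nhds x] F1 := by
    intro x hx
    filter_upwards [isOpen_Ioi.mem_nhds (show x ∈ Ioi (-1 : ℝ) from by
      simp only [mem_Ioi]; linarith)] with y hy
    exact hderiv y (by simp only [mem_Ioi] at hy; linarith)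
  have hderiv2 : ∀ x : ℝ, 0 < 1 + x →
      deriv (deriv f) x =
        p * (1 + x) ^ (p - 1) * ((1 + p) + (1 - p) * (δ * (1 + x) ^ p)) /
          (1 + δ * (1 + x) ^ p) ^ 3 := by
    intro x hx
    rw [(hEq x hx).deriv_eq]
    exact (hd2 p δ x hx hδ).deriv
  have hbounds : ∀ x : ℝ, 0 ≤ x →
      0 ≤ deriv (deriv f) x ∧ deriv (deriv f) x ≤ 2 * (1 + x) ^ (p - 1) := by
    intro x hx
    have hx1 : 0 < 1 + x := by linarith
    rw [hderiv2 x hx1]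
    have hApos : 0 < (1 + x) ^ p := Real.rpow_pos_of_pos hx1 p
    have hBpos : 0 < (1 + x) ^ (p - 1) := Real.rpow_pos_of_pos hx1 _
    set a := δ * (1 + x) ^ p with ha
    have ha0 : 0 < a := by positivity
    have hden : 0 < (1 + a) ^ 3 := by positivity
    constructor
    · apply div_nonneg _ (le_of_lt hden)
      have : 0 ≤ (1 + p) + (1 - p) * a := by nlinarith
      positivity
    · rw [div_le_iff₀ hden]
      have hpp : p * (1 - p) ≤ 1 := by nlinarith [sq_nonneg (1 - p)]
      have hppa : p * (1 - p) * a ≤ a := by nlinarith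
      have h1 : p * ((1 + p) + (1 - p) * a) ≤ 2 * (1 + a) := by nlinarith
      have h2 : (2 : ℝ) * (1 + a) ≤ 2 * (1 + a) ^ 3 := by
        nlinarith [mul_nonneg (mul_nonneg ha0.le (by linarith : (0:ℝ) ≤ 1 + a))
          (by linarith : (0:ℝ) ≤ 2 + a)]
      nlinarith [mul_le_mul_of_nonneg_left (h1.trans h2) hBpos.le]
  refine ⟨hbounds, ?_⟩
  apply convexOn_of_deriv2_nonneg (convex_Ici 0)
  · intro x hx
    have hx1 : 0 < 1 + x := by have : (0:ℝ) ≤ x := hx; linarith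
    exact ((hd1 p δ x hx1 hδ).differentiableAt).continuousAt.continuousWithinAt
  · intro x hx
    rw [interior_Ici] at hx
    have hx1 : 0 < 1 + x := by have : (0:ℝ) < x := hx; linarith
    exact ((hd1 p δ x hx1 hδ).differentiableAt).differentiableWithinAt
  · intro x hx
    rw [interior_Ici] at hx
    have hx1 : 0 < 1 + x := by have : (0:ℝ) < x := hx; linarith
    exact (((hEq x hx1).differentiableAt_iff).mpr
      (hd2 p δ x hx1 hδ).differentiableAt).differentiableWithinAt
  · intro x hx
    rw [interior_Ici] at hx
    have hx1 : (0:ℝ) ≤ x := le_of_lt hx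
    simpa [Function.iterate_succ, Function.comp] using (hbounds x hx1).1
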